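/- Let G be a bridgeless graph with d(G)=4 and let uv be an edge with l_G(uv) = g*(G) = 9. Then S_{3,3} = ∅, and there is no edge of G between S_{1,2} and S_{2,1}, no edge between S_{2,3} and S_{3,2}, and no edge between S_{3,4} and S_{4,3}. -/

import Mathlib

/-- A multigraph: vertices `V`, edges `E`, each edge has two distinct endpoints. -/
structure Multigraph (V : Type*) (E : Type*) where
  ends : E → Sym2 V
  loopless : ∀ e, ¬ (ends e).IsDiag

namespace Multigraph

variable {V E : Type*}

/-- Adjacency in a multigraph: some edge joins `x` and `y`. -/
def Adjm (G : Multigraph V E) (x y : V) : Prop := ∃ e, G.ends e = s(x, y)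

/-- The underlying simple graph of a multigraph. -/
def toSimple (G : Multigraph V E) : SimpleGraph V where
  Adj x y := x ≠ y ∧ G.Adjm x y
  symm := by
    constructor
    rintro x y ⟨hne, e, he⟩
    exact ⟨hne.symm, e, he.trans (Sym2.eq_swap)⟩
  loopless := by constructor; rintro x ⟨hne, -⟩; exact hne rfl

/-- Distance between two vertices (length of a shortest path). -/
noncomputable def dist (G : Multigraph V E) (x y : V) : ℕ := G.toSimple.dist x y

/-- The diameter of a multigraph. -/
noncomputable def diam (G : Multigraph V E) : ℕ := sSup {n | ∃ x y, G.dist x y = n}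

/-- The multigraph obtained by deleting the edge `e₀`. -/
def deleteEdge (G : Multigraph V E) (e₀ : E) : Multigraph V {e : E // e ≠ e₀} where
  ends e := G.ends e.1
  loopless e := G.loopless e.1

/-- A (connected) multigraph is bridgeless if deleting any single edge leaves it connected. -/
def Bridgeless (G : Multigraph V E) : Prop :=
  ∀ e : E, ((G.deleteEdge e).toSimple).Connected

/-- Walks in a multigraph, recording the edges used. -/
inductive Walk (G : Multigraph V E) : V → V → Type _
  | nil {v : V} : Walk G v v
  | cons {x y z : V} (e : E) (he : G.ends e = s(x, y)) (p : Walk G y z) : Walk G x z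

namespace Walk

variable {G : Multigraph V E}

/-- The length (number of edges) of a walk. -/
def length : ∀ {x y : V}, G.Walk x y → ℕ
  | _, _, .nil => 0
  | _, _, .cons _ _ p => p.length + 1

/-- The list of edges of a walk. -/
def edges : ∀ {x y : V}, G.Walk x y → List E
  | _, _, .nil => []
  | _, _, .cons e _ p => e :: p.edges

/-- The list of vertices of a walk. -/
def support : ∀ {x y : V}, G.Walk x y → List V
  | x, _, .nil => [x]
  | x, _, .cons _ _ p => x :: p.support

/-- A closed walk is a cycle if its edges are distinct and its vertices
(other than the repeated base point) are distinct. -/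
def IsCycle {v : V} (p : G.Walk v v) : Prop :=
  p.edges.Nodup ∧ p.support.tail.Nodup ∧ 0 < p.length

end Walk

/-- The edge girth of `e`: the length of a shortest cycle containing `e`. -/
noncomputable def edgeGirth (G : Multigraph V E) (e : E) : ℕ :=
  sInf {n | ∃ (v : V) (p : G.Walk v v), p.IsCycle ∧ e ∈ p.edges ∧ p.length = n}

/-- The maximum edge girth `g*(G)`. -/
noncomputable def maxEdgeGirth (G : Multigraph V E) : ℕ :=
  sSup (Set.range fun e => G.edgeGirth e)

/-- An orientation of a multigraph: each edge is assigned a direction. -/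
structure Orientation (G : Multigraph V E) where
  dir : E → V × V
  compat : ∀ e, s((dir e).1, (dir e).2) = G.ends e

/-- Arcs of an orientation. -/
def Orientation.DAdj {G : Multigraph V E} (o : G.Orientation) (x y : V) : Prop :=
  ∃ e, o.dir e = (x, y)

/-- Directed distance in an orientation (`⊤` if unreachable). -/
noncomputable def Orientation.ddist {G : Multigraph V E} (o : G.Orientation) (x y : V) : ℕ∞ :=
  sInf {n : ℕ∞ | ∃ l : List V, List.Chain o.DAdj x l ∧
    (x :: l).getLast (List.cons_ne_nil x l) = y ∧ (l.length : ℕ∞) = n}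

/-- An orientation is strong if every vertex is reachable from every vertex by a directed path. -/
def Orientation.IsStrong {G : Multigraph V E} (o : G.Orientation) : Prop :=
  ∀ x y : V, o.ddist x y ≠ ⊤

/-- The diameter of an orientation. -/
noncomputable def Orientation.odiam {G : Multigraph V E} (o : G.Orientation) : ℕ∞ :=
  ⨆ (x : V) (y : V), o.ddist x y

end Multigraph

namespace Multigraph

variable {V E : Type*}

/-- `S G u v i j` is the set of vertices at distance `i` from `u` and `j` from `v`. -/
noncomputable def S (G : Multigraph V E) (u v : V) (i j : ℕ) : Set V :=
  {w | G.dist w u = i ∧ G.dist w v = j}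

/-- The neighbourhood of a vertex. -/
def nbhd (G : Multigraph V E) (w : V) : Set V := {x | G.Adjm w x}

end Multigraph

namespace Multigraph

variable {V E : Type*} {G : Multigraph V E}

lemma aux_delAdj {e : E} {x y : V} (hne : x ≠ y) (f : E) (hf : f ≠ e)
    (hends : G.ends f = s(x, y)) : (G.deleteEdge e).toSimple.Adj x y :=
  ⟨hne, ⟨f, hf⟩, hends⟩

/-- Transfer a simple-graph walk avoiding the edge `s(u,v)` into the deleted graph. -/
lemma aux_transfer {e : E} {u v : V} (he : G.ends e = s(u, v)) :
    ∀ {a b : V} (p : G.toSimple.Walk a b), s(u, v) ∉ p.edges →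
    ∃ q : (G.deleteEdge e).toSimple.Walk a b, q.length = p.length := by
  intro a b p
  induction p with
  | nil => exact fun _ => ⟨.nil, rfl⟩
  | @cons a c b h p ih =>
    intro hmem
    rw [SimpleGraph.Walk.edges_cons, List.mem_cons] at hmem
    push_neg at hmem
    obtain ⟨q, hq⟩ := ih hmem.2
    obtain ⟨hne, f, hf⟩ := h
    have hfe : f ≠ e := by
      rintro rfl
      exact hmem.1 (by rw [← he, hf])
    exact ⟨.cons (aux_delAdj hne f hfe hf) q,
      by show q.length + 1 = p.length + 1; rw [hq]⟩

/-- Lift a simple-graph walk in the deleted graph to a multigraph walk avoiding `e`. -/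
lemma aux_lift {e : E} : ∀ {a b : V} (q : (G.deleteEdge e).toSimple.Walk a b),
    ∃ p : G.Walk a b, p.length = q.length ∧ p.support = q.support ∧
      p.edges.map G.ends = q.edges ∧ e ∉ p.edges := by
  intro a b q
  induction q with
  | nil => exact ⟨.nil, rfl, rfl, rfl, by simp [Walk.edges]⟩
  | @cons x y z h q ih =>
    obtain ⟨p, h1, h2, h3, h4⟩ := ih
    obtain ⟨hne, f, hf⟩ := h
    refine ⟨.cons f.1 hf p, ?_, ?_, ?_, ?_⟩
    · simp [Walk.length, h1, SimpleGraph.Walk.length_cons]; rfl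
    · simp [Walk.support, h2, SimpleGraph.Walk.support_cons]; rfl
    · simp only [Walk.edges, List.map_cons, h3, SimpleGraph.Walk.edges_cons]
      rw [show G.ends f.1 = s(x, y) from hf]
      rfl
    · simp only [Walk.edges, List.mem_cons]
      rintro (h | hc)
      · exact f.2 h.symm
      · exact h4 hc

/-- A `u`–`v` walk in `G - e` gives a cycle through `e`, bounding the edge girth. -/
lemma aux_edgeGirth_le {e : E} {u v : V} (he : G.ends e = s(u, v))
    (W : (G.deleteEdge e).toSimple.Walk u v) :
    G.edgeGirth e ≤ W.length + 1 := by
  classical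
  have hqp := W.bypass_isPath
  have hql := W.length_bypass_le
  obtain ⟨p, h1, h2, h3, h4⟩ := aux_lift (G := G) (e := e) W.bypass
  have hpe : p.edges.Nodup := by
    have := hqp.isTrail.edges_nodup
    rw [← h3] at this
    exact this.of_map _
  have huv : u ≠ v := by
    intro h
    exact G.loopless e (by rw [he, h]; exact Sym2.mk_isDiag_iff.mpr rfl)
  set c : G.Walk v v := .cons e (he.trans Sym2.eq_swap) p with hc
  have hcyc : c.IsCycle := by
    refine ⟨?_, ?_, ?_⟩
    · simp only [hc, Walk.edges, List.nodup_cons]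
      exact ⟨h4, hpe⟩
    · have : c.support.tail = p.support := rfl
      rw [this, h2]
      exact hqp.support_nodup
    · show 0 < p.length + 1
      omega
  have hmem : p.length + 1 ∈ {n | ∃ (w : V) (q : G.Walk w w),
      q.IsCycle ∧ e ∈ q.edges ∧ q.length = n} :=
    ⟨v, c, hcyc, by simp [hc, Walk.edges], rfl⟩
  calc G.edgeGirth e ≤ p.length + 1 := Nat.sInf_le hmem
    _ ≤ W.length + 1 := by rw [h1]; omega

/-- A shortest walk avoiding a vertex too far from the endpoints. -/
lemma aux_exists_walk_avoid {w t s : V} (hr : G.toSimple.Reachable w t) {m : ℕ}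
    (hd : G.toSimple.dist w t = m)
    (hgt : m < G.toSimple.dist w s + G.toSimple.dist s t) :
    ∃ p : G.toSimple.Walk w t, p.length = m ∧ s ∉ p.support := by
  classical
  obtain ⟨p, hp⟩ := hr.exists_walk_length_eq_dist
  refine ⟨p, by rw [hp, hd], fun hs => ?_⟩
  have h1 := SimpleGraph.dist_le (p.takeUntil s hs)
  have h2 := SimpleGraph.dist_le (p.dropUntil s hs)
  have h3 : (p.takeUntil s hs).length + (p.dropUntil s hs).length = p.length := by
    rw [← SimpleGraph.Walk.length_append, SimpleGraph.Walk.take_spec]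
  omega

/-- A walk in `G - e` from `a` to `u`, of length `dist a u`, when `v` is too far. -/
lemma aux_walk_del {e : E} {u v : V} (he : G.ends e = s(u, v)) {a : V} {i : ℕ}
    (hr : G.toSimple.Reachable a u) (hd : G.toSimple.dist a u = i)
    (hlt : i < G.toSimple.dist a v + G.toSimple.dist v u) :
    ∃ q : (G.deleteEdge e).toSimple.Walk a u, q.length = i := by
  obtain ⟨p, hp, hsup⟩ := aux_exists_walk_avoid hr hd hlt
  have hni : s(u, v) ∉ p.edges := fun hmem =>
    hsup (SimpleGraph.Walk.snd_mem_support_of_mem_edges p hmem)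
  obtain ⟨q, hq⟩ := aux_transfer he p hni
  exact ⟨q, hq.trans hp⟩

lemma aux_adj_del {e : E} {u v : V} (he : G.ends e = s(u, v)) {x y : V}
    (hadj : G.Adjm x y) (hxy : x ≠ y) (hxu : x ≠ u) (hxv : x ≠ v) :
    (G.deleteEdge e).toSimple.Adj x y := by
  obtain ⟨f, hf⟩ := hadj
  refine aux_delAdj hxy f (fun h => ?_) hf
  subst h
  rw [he, Sym2.eq_iff] at hf
  rcases hf with ⟨h1, _⟩ | ⟨_, h2⟩
  · exact hxu h1.symm
  · exact hxv h2.symm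

/-- The general middle-layer case: an edge between `S_{i,i+1}` and `S_{i+1,i}` gives a
short cycle through `e`. -/
lemma aux_case_gen (hconn : G.toSimple.Connected) {e : E} {u v : V}
    (he : G.ends e = s(u, v)) {x y : V} {i : ℕ} (hi : 0 < i)
    (hxu : G.toSimple.dist x u = i) (hxv : G.toSimple.dist x v = i + 1)
    (hyu : G.toSimple.dist y u = i + 1) (hyv : G.toSimple.dist y v = i)
    (hadj : G.Adjm x y) : G.edgeGirth e ≤ 2 * i + 2 := by
  obtain ⟨q1, hq1⟩ := aux_walk_del he (hconn x u) hxu (by omega)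
  have he' : G.ends e = s(v, u) := he.trans Sym2.eq_swap
  obtain ⟨q2, hq2⟩ := aux_walk_del he' (hconn y v) hyv (by omega)
  have hxy : x ≠ y := fun h => by rw [h, hyu] at hxu; omega
  have hxune : x ≠ u := fun h => by rw [h, SimpleGraph.dist_self] at hxu; omega
  have hxvne : x ≠ v := fun h => by rw [h, SimpleGraph.dist_self] at hxv; omega
  have hadj' : (G.deleteEdge e).toSimple.Adj x y := aux_adj_del he hadj hxy hxune hxvne
  set W : (G.deleteEdge e).toSimple.Walk u v :=
    q1.reverse.append (.cons hadj' q2) with hW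
  have hlen : W.length = 2 * i + 1 := by
    simp [hW, SimpleGraph.Walk.length_append, SimpleGraph.Walk.length_reverse,
      SimpleGraph.Walk.length_cons, hq1, hq2]
    omega
  have := aux_edgeGirth_le he W
  omega

end Multigraph

/-- Let `G` be a bridgeless graph with `d(G) = 4` and let `uv` be an edge
with `l_G(uv) = g*(G) = 9`. Then `S₃₃ = ∅`, and there is no edge of `G` between `S₁₂` and
`S₂₁`, none between `S₂₃` and `S₃₂`, and none between `S₃₄` and `S₄₃`. -/
theorem stmt15 {V E : Type*} [Fintype V] [Fintype E] (G : Multigraph V E)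
    (hconn : G.toSimple.Connected) (hbridgeless : G.Bridgeless) (hdiam : G.diam = 4)
    (u v : V) (e : E) (he : G.ends e = s(u, v))
    (hmax : G.edgeGirth e = G.maxEdgeGirth) (h9 : G.maxEdgeGirth = 9) :
    G.S u v 3 3 = ∅ ∧
    (∀ x ∈ G.S u v 1 2, ∀ y ∈ G.S u v 2 1, ¬ G.Adjm x y) ∧
    (∀ x ∈ G.S u v 2 3, ∀ y ∈ G.S u v 3 2, ¬ G.Adjm x y) ∧
    (∀ x ∈ G.S u v 3 4, ∀ y ∈ G.S u v 4 3, ¬ G.Adjm x y) := by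
  have hg9 : G.edgeGirth e = 9 := hmax.trans h9
  have huv : u ≠ v := fun h => G.loopless e (by rw [he, h]; exact Sym2.mk_isDiag_iff.mpr rfl)
  have hduv : G.toSimple.dist u v = 1 :=
    SimpleGraph.dist_eq_one_iff_adj.mpr ⟨huv, e, he⟩
  have hdvu : G.toSimple.dist v u = 1 := by rw [SimpleGraph.dist_comm]; exact hduv
  refine ⟨?_, ?_, ?_, ?_⟩
  · rw [Set.eq_empty_iff_forall_notMem]
    intro w hw
    obtain ⟨hw1, hw2⟩ := hw
    have hw1' : G.toSimple.dist w u = 3 := hw1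
    have hw2' : G.toSimple.dist w v = 3 := hw2
    obtain ⟨q1, hq1⟩ := Multigraph.aux_walk_del he (hconn w u) hw1' (by omega)
    obtain ⟨q2, hq2⟩ := Multigraph.aux_walk_del (he.trans Sym2.eq_swap) (hconn w v) hw2'
      (by omega)
    have := Multigraph.aux_edgeGirth_le he (q1.reverse.append q2)
    rw [SimpleGraph.Walk.length_append, SimpleGraph.Walk.length_reverse, hq1, hq2] at this
    omega
  · intro x hx y hy hadj
    have := Multigraph.aux_case_gen hconn he (i := 1) (by omega) hx.1 hx.2 hy.1 hy.2 hadj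
    omega
  · intro x hx y hy hadj
    have := Multigraph.aux_case_gen hconn he (i := 2) (by omega) hx.1 hx.2 hy.1 hy.2 hadj
    omega
  · intro x hx y hy hadj
    have := Multigraph.aux_case_gen hconn he (i := 3) (by omega) hx.1 hx.2 hy.1 hy.2 hadj
    omega
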